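/- (Fundamental theorem for Hopf modules over weak Hopf algebras) Let M be a right H-Hopf module over a weak Hopf algebra H and N = {m ∈ M : ρ(m) = m·1₍₁₎ ⊗ 1₍₂₎} its space of coinvariants. Then the map α: N ⊗_{H_t} H → M, n ⊗ h ↦ n·h, is an isomorphism of right H-Hopf modules, with inverse β(m) = (m₍₀₎·S(m₍₁₎)) ⊗ m₍₂₎. -/

import Mathlib

open TensorProduct

/-- A (finite) quantum groupoid / weak Hopf algebra over `k` (Böhm–Nill–Szlachányi). -/
structure WeakHopfAlgebra (k : Type*) (H : Type*) [CommRing k] [Ring H] [Algebra k H] where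
  comul : H →ₗ[k] H ⊗[k] H
  counit : H →ₗ[k] k
  antipode : H →ₗ[k] H
  coassoc : ∀ h : H,
    (TensorProduct.assoc k H H H) ((LinearMap.rTensor H comul) (comul h)) =
      (LinearMap.lTensor H comul) (comul h)
  counit_lid : ∀ h : H,
    (TensorProduct.lid k H) ((LinearMap.rTensor H counit) (comul h)) = h
  counit_rid : ∀ h : H,
    (TensorProduct.rid k H) ((LinearMap.lTensor H counit) (comul h)) = h
  comul_mul : ∀ a b : H, comul (a * b) = comul a * comul b
  weak_comul_one_left :
    (LinearMap.lTensor H comul) (comul 1) =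
      (TensorProduct.assoc k H H H) (comul 1 ⊗ₜ[k] (1 : H)) * ((1 : H) ⊗ₜ[k] comul 1)
  weak_comul_one_right :
    (LinearMap.lTensor H comul) (comul 1) =
      ((1 : H) ⊗ₜ[k] comul 1) * (TensorProduct.assoc k H H H) (comul 1 ⊗ₜ[k] (1 : H))
  weak_counit_left : ∀ f g h : H,
    counit (f * g * h) =
      (LinearMap.mul' k k)
        ((TensorProduct.map (counit ∘ₗ LinearMap.mulLeft k f)
          (counit ∘ₗ LinearMap.mulRight k h)) (comul g))
  weak_counit_right : ∀ f g h : H,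
    counit (f * g * h) =
      (LinearMap.mul' k k)
        ((TensorProduct.map (counit ∘ₗ LinearMap.mulLeft k f)
          (counit ∘ₗ LinearMap.mulRight k h)) ((TensorProduct.comm k H H) (comul g)))
  antipode_right : ∀ h : H,
    (LinearMap.mul' k H) ((LinearMap.lTensor H antipode) (comul h)) =
      (TensorProduct.lid k H) ((LinearMap.rTensor H counit) (comul 1 * (h ⊗ₜ[k] (1 : H))))
  antipode_left : ∀ h : H,
    (LinearMap.mul' k H) ((LinearMap.rTensor H antipode) (comul h)) =
      (TensorProduct.rid k H) ((LinearMap.lTensor H counit) (((1 : H) ⊗ₜ[k] h) * comul 1))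
  antipode_conv : ∀ h : H,
    (LinearMap.mul' k H)
      ((TensorProduct.map ((LinearMap.mul' k H) ∘ₗ (LinearMap.rTensor H antipode) ∘ₗ comul)
        antipode) (comul h)) = antipode h

namespace WeakHopfAlgebra

variable {k H : Type*} [CommRing k] [Ring H] [Algebra k H] (W : WeakHopfAlgebra k H)

/-- The target counital map `ε_t(h) = ε(1₍₁₎h)1₍₂₎`. -/
noncomputable def εt : H →ₗ[k] H :=
  (TensorProduct.lid k H).toLinearMap ∘ₗ (LinearMap.rTensor H W.counit) ∘ₗ
    (LinearMap.mulLeft k (W.comul 1)) ∘ₗ ((TensorProduct.mk k H H).flip 1)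

/-- The source counital map `ε_s(h) = 1₍₁₎ε(h1₍₂₎)`. -/
noncomputable def εs : H →ₗ[k] H :=
  (TensorProduct.rid k H).toLinearMap ∘ₗ (LinearMap.lTensor H W.counit) ∘ₗ
    (LinearMap.mulRight k (W.comul 1)) ∘ₗ (TensorProduct.mk k H H 1)

end WeakHopfAlgebra

namespace WeakHopfAlgebra

open TensorProduct LinearMap

variable {k H : Type*} [CommRing k] [Ring H] [Algebra k H] (W : WeakHopfAlgebra k H)

/-! ### Generic tensor helpers -/

private lemma lT_mulLeft (g : H) (t : H ⊗[k] H) :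
    lTensor H (mulLeft k g) t = ((1 : H) ⊗ₜ[k] g) * t := by
  induction t using TensorProduct.induction_on with
  | zero => simp
  | tmul x y => simp [Algebra.TensorProduct.tmul_mul_tmul]
  | add u v hu hv => simp [mul_add, hu, hv]

private lemma rT_mulLeft (g : H) (t : H ⊗[k] H) :
    rTensor H (mulLeft k g) t = (g ⊗ₜ[k] (1 : H)) * t := by
  induction t using TensorProduct.induction_on with
  | zero => simp
  | tmul x y => simp [Algebra.TensorProduct.tmul_mul_tmul]
  | add u v hu hv => simp [mul_add, hu, hv]

private lemma lT_mulRight (g : H) (t : H ⊗[k] H) :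
    lTensor H (mulRight k g) t = t * ((1 : H) ⊗ₜ[k] g) := by
  induction t using TensorProduct.induction_on with
  | zero => simp
  | tmul x y => simp [Algebra.TensorProduct.tmul_mul_tmul]
  | add u v hu hv => simp [add_mul, hu, hv]

private lemma rT_mulRight (g : H) (t : H ⊗[k] H) :
    rTensor H (mulRight k g) t = t * (g ⊗ₜ[k] (1 : H)) := by
  induction t using TensorProduct.induction_on with
  | zero => simp
  | tmul x y => simp [Algebra.TensorProduct.tmul_mul_tmul]
  | add u v hu hv => simp [add_mul, hu, hv]

/-! ### basic reformulations -/

private lemma εt_eq (z : H) :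
    W.εt z = (TensorProduct.lid k H)
      ((rTensor H W.counit) (W.comul 1 * (z ⊗ₜ[k] (1 : H)))) := rfl

private lemma εs_eq (z : H) :
    W.εs z = (TensorProduct.rid k H)
      ((lTensor H W.counit) (((1 : H) ⊗ₜ[k] z) * W.comul 1)) := rfl

private lemma antipode_right' (h : H) :
    LinearMap.mul' k H ((lTensor H W.antipode) (W.comul h)) = W.εt h :=
  (W.antipode_right h).trans (W.εt_eq h).symm

private lemma antipode_left' (h : H) :
    LinearMap.mul' k H ((rTensor H W.antipode) (W.comul h)) = W.εs h :=
  (W.antipode_left h).trans (W.εs_eq h).symm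

private lemma comul_one_mul (h : H) : W.comul 1 * W.comul h = W.comul h := by
  rw [← W.comul_mul, one_mul]

private lemma comul_mul_one (h : H) : W.comul h * W.comul 1 = W.comul h := by
  rw [← W.comul_mul, mul_one]

end WeakHopfAlgebra
namespace WeakHopfAlgebra

open TensorProduct LinearMap

variable {k H : Type*} [CommRing k] [Ring H] [Algebra k H] (W : WeakHopfAlgebra k H)

/-- `εt` with a general tensor in place of `Δ1`. -/
private noncomputable def etB (u : H ⊗[k] H) : H →ₗ[k] H :=
  (TensorProduct.lid k H).toLinearMap ∘ₗ (rTensor H W.counit) ∘ₗ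
    (mulLeft k u) ∘ₗ ((TensorProduct.mk k H H).flip 1)

/-- `εs` with a general tensor in place of `Δ1`. -/
private noncomputable def esB (u : H ⊗[k] H) : H →ₗ[k] H :=
  (TensorProduct.rid k H).toLinearMap ∘ₗ (lTensor H W.counit) ∘ₗ
    (mulRight k u) ∘ₗ (TensorProduct.mk k H H 1)

private lemma etB_comul_one : W.etB (W.comul 1) = W.εt := rfl
private lemma esB_comul_one : W.esB (W.comul 1) = W.εs := rfl

private lemma etB_tmul (a b z : H) : W.etB (a ⊗ₜ[k] b) z = W.counit (a * z) • b := by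
  simp [etB, Algebra.TensorProduct.tmul_mul_tmul]

private lemma esB_tmul (a b z : H) : W.esB (a ⊗ₜ[k] b) z = W.counit (z * b) • a := by
  simp [esB, Algebra.TensorProduct.tmul_mul_tmul]

private lemma etB_add (u v : H ⊗[k] H) (z : H) :
    W.etB (u + v) z = W.etB u z + W.etB v z := by
  simp [etB, add_mul]

private lemma esB_add (u v : H ⊗[k] H) (z : H) :
    W.esB (u + v) z = W.esB u z + W.esB v z := by
  simp [esB, mul_add]

private lemma etB_zero (z : H) : W.etB (0 : H ⊗[k] H) z = 0 := by simp [etB]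
private lemma esB_zero (z : H) : W.esB (0 : H ⊗[k] H) z = 0 := by simp [esB]

/-- (D): `ε_t(h₁) h₂ = h`. -/
private lemma counit_t_comul (h : H) :
    LinearMap.mul' k H ((rTensor H W.εt) (W.comul h)) = h := by
  have key : ∀ t : H ⊗[k] H,
      LinearMap.mul' k H ((rTensor H W.εt) t) =
        (TensorProduct.lid k H) ((rTensor H W.counit) (W.comul 1 * t)) := by
    intro t
    induction t using TensorProduct.induction_on with
    | zero => simp
    | tmul x y =>
      rw [rTensor_tmul, LinearMap.mul'_apply, W.εt_eq]
      have : ∀ u : H ⊗[k] H,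
          (TensorProduct.lid k H) ((rTensor H W.counit) (u * (x ⊗ₜ[k] (1:H)))) * y =
            (TensorProduct.lid k H) ((rTensor H W.counit) (u * (x ⊗ₜ[k] y))) := by
        intro u
        induction u using TensorProduct.induction_on with
        | zero => simp
        | tmul a b => simp [Algebra.TensorProduct.tmul_mul_tmul, smul_mul_assoc]
        | add a b ha hb => simp [add_mul, ha, hb]
      exact this (W.comul 1)
    | add u v hu hv => simp [mul_add, hu, hv]
  rw [key, W.comul_one_mul, W.counit_lid]

/-- (D'): `h₁ ε_s(h₂) = h`. -/
private lemma counit_s_comul (h : H) :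
    LinearMap.mul' k H ((lTensor H W.εs) (W.comul h)) = h := by
  have key : ∀ t : H ⊗[k] H,
      LinearMap.mul' k H ((lTensor H W.εs) t) =
        (TensorProduct.rid k H) ((lTensor H W.counit) (t * W.comul 1)) := by
    intro t
    induction t using TensorProduct.induction_on with
    | zero => simp
    | tmul x y =>
      rw [lTensor_tmul, LinearMap.mul'_apply, W.εs_eq]
      have : ∀ u : H ⊗[k] H,
          x * (TensorProduct.rid k H) ((lTensor H W.counit) (((1:H) ⊗ₜ[k] y) * u)) =
            (TensorProduct.rid k H) ((lTensor H W.counit) ((x ⊗ₜ[k] y) * u)) := by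
        intro u
        induction u using TensorProduct.induction_on with
        | zero => simp
        | tmul a b => simp [Algebra.TensorProduct.tmul_mul_tmul, mul_smul_comm]
        | add a b ha hb => simp [mul_add, ha, hb]
      exact this (W.comul 1)
    | add u v hu hv => simp [add_mul, hu, hv]
  rw [key, W.comul_mul_one, W.counit_rid]

end WeakHopfAlgebra
namespace WeakHopfAlgebra

open TensorProduct LinearMap

variable {k H : Type*} [CommRing k] [Ring H] [Algebra k H] (W : WeakHopfAlgebra k H)

/-- `(id ⊗ ε_t)(Δ1) = Δ1`. -/
private lemma lT_εt_comul_one : lTensor H W.εt (W.comul 1) = W.comul 1 := by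
  have L10a : ∀ u t : H ⊗[k] H,
      lTensor H (W.etB u) t =
        (lTensor H ((TensorProduct.lid k H).toLinearMap ∘ₗ rTensor H W.counit))
          (((1:H) ⊗ₜ[k] u) * (TensorProduct.assoc k H H H) (t ⊗ₜ[k] (1:H))) := by
    intro u t
    induction t using TensorProduct.induction_on with
    | zero => simp
    | tmul a b =>
      induction u using TensorProduct.induction_on with
      | zero => simp [etB_zero]
      | tmul c d =>
        simp [W.etB_tmul, Algebra.TensorProduct.tmul_mul_tmul, TensorProduct.assoc_tmul,
          TensorProduct.smul_tmul', TensorProduct.tmul_smul]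
      | add x y hx hy =>
        simp only [lTensor_tmul] at hx hy ⊢
        rw [W.etB_add, TensorProduct.tmul_add, hx, hy, TensorProduct.tmul_add, add_mul,
          map_add]
    | add x y hx hy =>
      simp only [map_add, TensorProduct.add_tmul, mul_add] at hx hy ⊢
      rw [hx, hy]
  have h1 := L10a (W.comul 1) (W.comul 1)
  rw [W.etB_comul_one] at h1
  rw [h1, ← W.weak_comul_one_right, ← lTensor_comp_apply]
  have h2 : ((TensorProduct.lid k H).toLinearMap ∘ₗ rTensor H W.counit) ∘ₗ W.comul
      = LinearMap.id := by
    apply LinearMap.ext; intro x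
    simpa using W.counit_lid x
  rw [h2, lTensor_id, LinearMap.id_apply]

end WeakHopfAlgebra
namespace WeakHopfAlgebra

open TensorProduct LinearMap

variable {k H : Type*} [CommRing k] [Ring H] [Algebra k H] (W : WeakHopfAlgebra k H)

/-- auxiliary "ε in the first slot after multiplying by `t`" map. -/
private noncomputable def kap (t : H ⊗[k] H) : H ⊗[k] H →ₗ[k] H :=
  (TensorProduct.lid k H).toLinearMap ∘ₗ (rTensor H W.counit) ∘ₗ (mulLeft k t)

private lemma kap_add (t t' : H ⊗[k] H) : W.kap (t + t') = W.kap t + W.kap t' := by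
  apply LinearMap.ext; intro y
  simp [kap, add_mul]

private lemma kap_zero : W.kap (0 : H ⊗[k] H) = 0 := by
  apply LinearMap.ext; intro y; simp [kap]

private lemma kap_tmul (c d p q : H) :
    W.kap (c ⊗ₜ[k] d) (p ⊗ₜ[k] q) = W.counit (c * p) • (d * q) := by
  simp [kap, Algebra.TensorProduct.tmul_mul_tmul]

/-- (B): `ε_s(h₁) ⊗ h₂ = 1₁ ⊗ h 1₂`. -/
private lemma rT_εs_comul (h : H) :
    rTensor H W.εs (W.comul h) = ((1:H) ⊗ₜ[k] h) * W.comul 1 := by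
  have L9a : ∀ t u w : H ⊗[k] H,
      rTensor H (W.esB w) (t * u) =
        lTensor H (W.kap t) (((1:H) ⊗ₜ[k] u) * (TensorProduct.assoc k H H H) (w ⊗ₜ[k] (1:H))) := by
    intro t u w
    induction t using TensorProduct.induction_on with
    | zero => simp [W.kap_zero]
    | tmul c d =>
      induction u using TensorProduct.induction_on with
      | zero => simp
      | tmul p q =>
        induction w using TensorProduct.induction_on with
        | zero => simp [esB_zero]
        | tmul r s =>
          simp [Algebra.TensorProduct.tmul_mul_tmul, TensorProduct.assoc_tmul,
            W.esB_tmul, W.kap_tmul, TensorProduct.smul_tmul', TensorProduct.tmul_smul,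
            mul_assoc]
        | add x y hx hy =>
          simp only [TensorProduct.add_tmul, map_add, mul_add, W.esB_add] at hx hy ⊢
          simp only [rTensor_tmul, Algebra.TensorProduct.tmul_mul_tmul] at hx hy ⊢
          rw [W.esB_add, TensorProduct.add_tmul, hx, hy]
      | add x y hx hy =>
        simp only [mul_add, add_mul, TensorProduct.tmul_add, map_add] at hx hy ⊢
        rw [hx, hy]
    | add x y hx hy =>
      simp only [add_mul, map_add, W.kap_add, LinearMap.add_apply,
        lTensor_add] at hx hy ⊢
      rw [hx, hy]
  have h1 := L9a (W.comul h) (W.comul 1) (W.comul 1)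
  rw [W.comul_mul_one, W.esB_comul_one] at h1
  rw [h1, ← W.weak_comul_one_right, ← lTensor_comp_apply]
  have h2 : W.kap (W.comul h) ∘ₗ W.comul = mulLeft k h := by
    apply LinearMap.ext; intro x
    simp only [LinearMap.comp_apply, kap, mulLeft_apply]
    rw [← W.comul_mul]
    simpa using W.counit_lid (h * x)
  rw [h2]
  exact lT_mulLeft h (W.comul 1)

end WeakHopfAlgebra
namespace WeakHopfAlgebra

open TensorProduct LinearMap

variable {k H : Type*} [CommRing k] [Ring H] [Algebra k H] (W : WeakHopfAlgebra k H)

/-- (F): `Δ(ε_t z) = (ε_t z ⊗ 1) Δ1`. -/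
private lemma comul_εt (z : H) :
    W.comul (W.εt z) = (W.εt z ⊗ₜ[k] (1:H)) * W.comul 1 := by
  set χ : H ⊗[k] (H ⊗[k] H) →ₗ[k] H ⊗[k] H :=
    (TensorProduct.lid k (H ⊗[k] H)).toLinearMap ∘ₗ
      rTensor (H ⊗[k] H) (W.counit ∘ₗ mulRight k z) with hχ
  have χ_tmul : ∀ (a : H) (w : H ⊗[k] H), χ (a ⊗ₜ[k] w) = W.counit (a * z) • w := by
    intro a w; simp [hχ]
  have L11a : ∀ t : H ⊗[k] H, W.comul (W.etB t z) = χ (lTensor H W.comul t) := by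
    intro t
    induction t using TensorProduct.induction_on with
    | zero => simp [etB_zero]
    | tmul a b => rw [W.etB_tmul, map_smul, lTensor_tmul, χ_tmul]
    | add u v hu hv => rw [W.etB_add, map_add, map_add, map_add, hu, hv]
  have L11b : ∀ u t : H ⊗[k] H,
      χ ((TensorProduct.assoc k H H H) (u ⊗ₜ[k] (1:H)) * ((1:H) ⊗ₜ[k] t)) =
        ((W.etB u z) ⊗ₜ[k] (1:H)) * t := by
    intro u t
    induction u using TensorProduct.induction_on with
    | zero => simp [etB_zero]
    | tmul a b =>
      induction t using TensorProduct.induction_on with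
      | zero => simp
      | tmul c d =>
        simp [TensorProduct.assoc_tmul, Algebra.TensorProduct.tmul_mul_tmul, χ_tmul,
          W.etB_tmul, TensorProduct.smul_tmul', TensorProduct.tmul_smul,
          smul_mul_assoc, mul_smul_comm]
      | add p q hp hq =>
        simp only [TensorProduct.tmul_add, mul_add, map_add] at hp hq ⊢
        rw [hp, hq]
    | add p q hp hq =>
      simp only [TensorProduct.add_tmul, map_add, add_mul, W.etB_add] at hp hq ⊢
      rw [hp, hq]
  rw [← W.etB_comul_one, L11a, W.weak_comul_one_left, L11b, W.etB_comul_one]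

/-- (F'): `Δ(ε_s z) = Δ1 (1 ⊗ ε_s z)`. -/
private lemma comul_εs (z : H) :
    W.comul (W.εs z) = W.comul 1 * ((1:H) ⊗ₜ[k] W.εs z) := by
  set χ : (H ⊗[k] H) ⊗[k] H →ₗ[k] H ⊗[k] H :=
    (TensorProduct.rid k (H ⊗[k] H)).toLinearMap ∘ₗ
      lTensor (H ⊗[k] H) (W.counit ∘ₗ mulLeft k z) with hχ
  have χ_tmul : ∀ (w : H ⊗[k] H) (b : H), χ (w ⊗ₜ[k] b) = W.counit (z * b) • w := by
    intro w b; simp [hχ]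
  have L12a : ∀ t : H ⊗[k] H, W.comul (W.esB t z) = χ (rTensor H W.comul t) := by
    intro t
    induction t using TensorProduct.induction_on with
    | zero => simp [esB_zero]
    | tmul a b => rw [W.esB_tmul, map_smul, rTensor_tmul, χ_tmul]
    | add u v hu hv => rw [W.esB_add, map_add, map_add, map_add, hu, hv]
  have L12b : ∀ u t : H ⊗[k] H,
      χ ((TensorProduct.assoc k H H H).symm
          ((TensorProduct.assoc k H H H) (u ⊗ₜ[k] (1:H)) * ((1:H) ⊗ₜ[k] t))) =
        u * ((1:H) ⊗ₜ[k] (W.esB t z)) := by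
    intro u t
    induction u using TensorProduct.induction_on with
    | zero => simp
    | tmul a b =>
      induction t using TensorProduct.induction_on with
      | zero => simp [esB_zero, TensorProduct.tmul_zero]
      | tmul c d =>
        simp [TensorProduct.assoc_tmul, TensorProduct.assoc_symm_tmul,
          Algebra.TensorProduct.tmul_mul_tmul, χ_tmul, W.esB_tmul,
          TensorProduct.smul_tmul', TensorProduct.tmul_smul,
          smul_mul_assoc, mul_smul_comm]
      | add p q hp hq =>
        simp only [TensorProduct.tmul_add, mul_add, map_add, W.esB_add] at hp hq ⊢
        rw [hp, hq]
    | add p q hp hq =>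
      simp only [TensorProduct.add_tmul, map_add, add_mul] at hp hq ⊢
      rw [hp, hq]
  have hco : rTensor H W.comul (W.comul 1) =
      (TensorProduct.assoc k H H H).symm (lTensor H W.comul (W.comul 1)) := by
    rw [← W.coassoc 1, LinearEquiv.symm_apply_apply]
  rw [← W.esB_comul_one, L12a, hco, W.weak_comul_one_left, L12b, W.esB_comul_one]

/-- `ε_s(x)` and `ε_t(y)` commute. -/
private lemma εs_mul_εt (x y : H) : W.εs x * W.εt y = W.εt y * W.εs x := by
  set ζ : H ⊗[k] (H ⊗[k] H) →ₗ[k] H :=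
    (TensorProduct.lid k H).toLinearMap ∘ₗ rTensor H (W.counit ∘ₗ mulRight k y) ∘ₗ
      lTensor H ((TensorProduct.rid k H).toLinearMap ∘ₗ lTensor H (W.counit ∘ₗ mulLeft k x))
      with hζ
  have ζ_tmul : ∀ (a u v : H), ζ (a ⊗ₜ[k] (u ⊗ₜ[k] v)) =
      (W.counit (a * y) * W.counit (x * v)) • u := by
    intro a u v
    simp [hζ, TensorProduct.smul_tmul', TensorProduct.tmul_smul, smul_smul, mul_comm]
  have L13a : ∀ u t : H ⊗[k] H,
      ζ ((TensorProduct.assoc k H H H) (u ⊗ₜ[k] (1:H)) * ((1:H) ⊗ₜ[k] t)) =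
        W.etB u y * W.esB t x := by
    intro u t
    induction u using TensorProduct.induction_on with
    | zero => simp [etB_zero]
    | tmul a b =>
      induction t using TensorProduct.induction_on with
      | zero => simp [esB_zero]
      | tmul c d =>
        simp [TensorProduct.assoc_tmul, Algebra.TensorProduct.tmul_mul_tmul, ζ_tmul,
          W.etB_tmul, W.esB_tmul, smul_mul_assoc, mul_smul_comm, smul_smul, mul_comm]
      | add p q hp hq =>
        simp only [TensorProduct.tmul_add, mul_add, map_add, W.esB_add] at hp hq ⊢
        rw [hp, hq]
    | add p q hp hq =>
      simp only [TensorProduct.add_tmul, map_add, add_mul, W.etB_add] at hp hq ⊢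
      rw [hp, hq]
  have L13b : ∀ u t : H ⊗[k] H,
      ζ (((1:H) ⊗ₜ[k] t) * (TensorProduct.assoc k H H H) (u ⊗ₜ[k] (1:H))) =
        W.esB t x * W.etB u y := by
    intro u t
    induction u using TensorProduct.induction_on with
    | zero => simp [etB_zero]
    | tmul a b =>
      induction t using TensorProduct.induction_on with
      | zero => simp [esB_zero]
      | tmul c d =>
        simp [TensorProduct.assoc_tmul, Algebra.TensorProduct.tmul_mul_tmul, ζ_tmul,
          W.etB_tmul, W.esB_tmul, smul_mul_assoc, mul_smul_comm, smul_smul, mul_comm]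
      | add p q hp hq =>
        simp only [TensorProduct.tmul_add, map_add, add_mul, W.esB_add] at hp hq ⊢
        rw [hp, hq]
    | add p q hp hq =>
      simp only [TensorProduct.add_tmul, map_add, mul_add, W.etB_add] at hp hq ⊢
      rw [hp, hq]
  have h1 := L13a (W.comul 1) (W.comul 1)
  have h2 := L13b (W.comul 1) (W.comul 1)
  rw [← W.weak_comul_one_left] at h1
  rw [← W.weak_comul_one_right] at h2
  rw [W.etB_comul_one, W.esB_comul_one] at h1 h2
  rw [← h1, ← h2]

end WeakHopfAlgebra
namespace WeakHopfAlgebra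

open TensorProduct LinearMap

variable {k H : Type*} [CommRing k] [Ring H] [Algebra k H] (W : WeakHopfAlgebra k H)

private lemma comul_one_idem : W.comul 1 * W.comul 1 = W.comul (1 : H) := by
  rw [← W.comul_mul, one_mul]

/-- `(ε_s ⊗ id)(Δ1) = Δ1`. -/
private lemma rT_εs_comul_one : rTensor H W.εs (W.comul 1) = W.comul 1 := by
  rw [W.rT_εs_comul 1, ← Algebra.TensorProduct.one_def, one_mul]

/-- `Δ1` commutes with `1 ⊗ ε_s x`. -/
private lemma comul_one_comm_εs (x : H) :
    W.comul 1 * ((1:H) ⊗ₜ[k] W.εs x) = ((1:H) ⊗ₜ[k] W.εs x) * W.comul 1 := by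
  have hmap : mulRight k (W.εs x) ∘ₗ W.εt = mulLeft k (W.εs x) ∘ₗ W.εt := by
    apply LinearMap.ext; intro y
    simp only [LinearMap.comp_apply, mulRight_apply, mulLeft_apply]
    exact (W.εs_mul_εt x y).symm
  calc W.comul 1 * ((1:H) ⊗ₜ[k] W.εs x)
      = lTensor H (mulRight k (W.εs x)) (W.comul 1) := (lT_mulRight _ _).symm
    _ = lTensor H (mulRight k (W.εs x)) (lTensor H W.εt (W.comul 1)) := by
        rw [W.lT_εt_comul_one]
    _ = lTensor H (mulRight k (W.εs x) ∘ₗ W.εt) (W.comul 1) := by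
        rw [← lTensor_comp_apply]
    _ = lTensor H (mulLeft k (W.εs x) ∘ₗ W.εt) (W.comul 1) := by rw [hmap]
    _ = lTensor H (mulLeft k (W.εs x)) (lTensor H W.εt (W.comul 1)) := by
        rw [lTensor_comp_apply]
    _ = lTensor H (mulLeft k (W.εs x)) (W.comul 1) := by rw [W.lT_εt_comul_one]
    _ = ((1:H) ⊗ₜ[k] W.εs x) * W.comul 1 := lT_mulLeft _ _

/-- `Δ1` commutes with `ε_t z ⊗ 1`. -/
private lemma comul_one_comm_εt (z : H) :
    W.comul 1 * (W.εt z ⊗ₜ[k] (1:H)) = (W.εt z ⊗ₜ[k] (1:H)) * W.comul 1 := by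
  have hmap : mulRight k (W.εt z) ∘ₗ W.εs = mulLeft k (W.εt z) ∘ₗ W.εs := by
    apply LinearMap.ext; intro y
    simp only [LinearMap.comp_apply, mulRight_apply, mulLeft_apply]
    exact W.εs_mul_εt y z
  calc W.comul 1 * (W.εt z ⊗ₜ[k] (1:H))
      = rTensor H (mulRight k (W.εt z)) (W.comul 1) := (rT_mulRight _ _).symm
    _ = rTensor H (mulRight k (W.εt z)) (rTensor H W.εs (W.comul 1)) := by
        rw [W.rT_εs_comul_one]
    _ = rTensor H (mulRight k (W.εt z) ∘ₗ W.εs) (W.comul 1) := by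
        rw [← rTensor_comp_apply]
    _ = rTensor H (mulLeft k (W.εt z) ∘ₗ W.εs) (W.comul 1) := by rw [hmap]
    _ = rTensor H (mulLeft k (W.εt z)) (rTensor H W.εs (W.comul 1)) := by
        rw [rTensor_comp_apply]
    _ = rTensor H (mulLeft k (W.εt z)) (W.comul 1) := by rw [W.rT_εs_comul_one]
    _ = (W.εt z ⊗ₜ[k] (1:H)) * W.comul 1 := rT_mulLeft _ _

private lemma comul_one_absorb (z : H) :
    W.comul 1 * ((W.εt z ⊗ₜ[k] (1:H)) * W.comul 1) = (W.εt z ⊗ₜ[k] (1:H)) * W.comul 1 := by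
  rw [← mul_assoc, W.comul_one_comm_εt, mul_assoc, W.comul_one_idem]

/-- `ε_s(h₁) S(h₂) = S(h)`. -/
private lemma εs_conv_antipode (h : H) :
    LinearMap.mul' k H ((map W.εs W.antipode) (W.comul h)) = W.antipode h := by
  have h1 : (LinearMap.mul' k H) ∘ₗ (rTensor H W.antipode) ∘ₗ W.comul = W.εs := by
    apply LinearMap.ext; intro x
    exact W.antipode_left' x
  have := W.antipode_conv h
  rwa [h1] at this

/-- `S(h₁) ε_t(h₂) = S(h)`. -/
private lemma antipode_conv_εt (h : H) :
    LinearMap.mul' k H ((map W.antipode W.εt) (W.comul h)) = W.antipode h := by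
  have hεt : W.εt = (LinearMap.mul' k H) ∘ₗ (lTensor H W.antipode) ∘ₗ W.comul := by
    apply LinearMap.ext; intro x
    exact (W.antipode_right' x).symm
  rw [hεt]
  have hsplit : ∀ t : H ⊗[k] H,
      (map W.antipode ((LinearMap.mul' k H) ∘ₗ (lTensor H W.antipode) ∘ₗ W.comul)) t =
        (map W.antipode ((LinearMap.mul' k H) ∘ₗ (lTensor H W.antipode)))
          (lTensor H W.comul t) := by
    intro t
    induction t using TensorProduct.induction_on with
    | zero => simp
    | tmul x y => simp
    | add u v hu hv => simp [hu, hv]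
  rw [hsplit, ← W.coassoc h]
  have key : (LinearMap.mul' k H) ∘ₗ
      (map W.antipode ((LinearMap.mul' k H) ∘ₗ (lTensor H W.antipode))) ∘ₗ
        (TensorProduct.assoc k H H H).toLinearMap =
      (LinearMap.mul' k H) ∘ₗ (map ((LinearMap.mul' k H) ∘ₗ (rTensor H W.antipode))
        W.antipode) := by
    apply TensorProduct.ext_threefold
    intro x y z
    simp [mul_assoc]
  have key' := LinearMap.congr_fun key (rTensor H W.comul (W.comul h))
  simp only [LinearMap.comp_apply, LinearEquiv.coe_coe, LinearEquiv.coe_toLinearMap] at key'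
  rw [key']
  have hsplit2 : ∀ t : H ⊗[k] H,
      (map ((LinearMap.mul' k H) ∘ₗ (rTensor H W.antipode)) W.antipode)
        (rTensor H W.comul t) =
      (map ((LinearMap.mul' k H) ∘ₗ (rTensor H W.antipode) ∘ₗ W.comul)
        W.antipode) t := by
    intro t
    induction t using TensorProduct.induction_on with
    | zero => simp
    | tmul x y => simp
    | add u v hu hv => simp [hu, hv]
  rw [hsplit2]
  exact W.antipode_conv h

end WeakHopfAlgebra
namespace WeakHopfAlgebra

open TensorProduct LinearMap

variable {k H : Type*} [CommRing k] [Ring H] [Algebra k H] (W : WeakHopfAlgebra k H)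

private lemma comul_mul'_apply (u : H ⊗[k] H) :
    W.comul (LinearMap.mul' k H u) =
      LinearMap.mul' k (H ⊗[k] H) ((map W.comul W.comul) u) := by
  induction u using TensorProduct.induction_on with
  | zero => simp
  | tmul x y => simp [W.comul_mul]
  | add u v hu hv => simp [hu, hv]

/-- associativity of convolution in `Hom(H, H⊗H)`. -/
private lemma conv_assoc (f g r : H →ₗ[k] H ⊗[k] H) (h : H) :
    LinearMap.mul' k (H ⊗[k] H)
      ((map f ((LinearMap.mul' k (H ⊗[k] H)) ∘ₗ (map g r) ∘ₗ W.comul)) (W.comul h)) =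
    LinearMap.mul' k (H ⊗[k] H)
      ((map ((LinearMap.mul' k (H ⊗[k] H)) ∘ₗ (map f g) ∘ₗ W.comul) r) (W.comul h)) := by
  have hsplitL : ∀ t : H ⊗[k] H,
      (map f ((LinearMap.mul' k (H ⊗[k] H)) ∘ₗ (map g r) ∘ₗ W.comul)) t =
        (map f ((LinearMap.mul' k (H ⊗[k] H)) ∘ₗ (map g r))) (lTensor H W.comul t) := by
    intro t
    induction t using TensorProduct.induction_on with
    | zero => simp
    | tmul x y => simp
    | add u v hu hv => simp [hu, hv]
  have hsplitR : ∀ t : H ⊗[k] H,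
      (map ((LinearMap.mul' k (H ⊗[k] H)) ∘ₗ (map f g) ∘ₗ W.comul) r) t =
        (map ((LinearMap.mul' k (H ⊗[k] H)) ∘ₗ (map f g)) r) (rTensor H W.comul t) := by
    intro t
    induction t using TensorProduct.induction_on with
    | zero => simp
    | tmul x y => simp
    | add u v hu hv => simp [hu, hv]
  have key : (LinearMap.mul' k (H ⊗[k] H)) ∘ₗ
      (map f ((LinearMap.mul' k (H ⊗[k] H)) ∘ₗ (map g r))) ∘ₗ
        (TensorProduct.assoc k H H H).toLinearMap =
      (LinearMap.mul' k (H ⊗[k] H)) ∘ₗ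
        (map ((LinearMap.mul' k (H ⊗[k] H)) ∘ₗ (map f g)) r) := by
    apply TensorProduct.ext_threefold
    intro x y z
    simp [mul_assoc]
  have key' := LinearMap.congr_fun key (rTensor H W.comul (W.comul h))
  simp only [LinearMap.comp_apply, LinearEquiv.coe_coe, LinearEquiv.coe_toLinearMap] at key'
  rw [hsplitL, hsplitR, ← W.coassoc h, key']

/-- THE key identity (†):  `Σ (1 ⊗ h₁) Δ(S(h₂)) = (S(h) ⊗ 1) Δ(1)`. -/
private lemma dagger (h : H) :
    LinearMap.mul' k (H ⊗[k] H)
      ((map (TensorProduct.mk k H H 1) (W.comul ∘ₗ W.antipode)) (W.comul h)) =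
    (W.antipode h ⊗ₜ[k] (1:H)) * W.comul 1 := by
  -- step 1 : `Δ∘S = (Δ∘εs) * (Δ∘S)` in convolution
  have hstep1 : W.comul ∘ₗ W.antipode =
      (LinearMap.mul' k (H ⊗[k] H)) ∘ₗ
        (map (W.comul ∘ₗ W.εs) (W.comul ∘ₗ W.antipode)) ∘ₗ W.comul := by
    apply LinearMap.ext; intro g
    simp only [LinearMap.comp_apply]
    rw [← W.εs_conv_antipode g, W.comul_mul'_apply, TensorProduct.map_comp,
      LinearMap.comp_apply]
  -- step 3 : `ι₂ * (Δ∘εs) = V` where `V g = (1 ⊗ g) Δ1`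
  have hstep3 : (LinearMap.mul' k (H ⊗[k] H)) ∘ₗ
      (map (TensorProduct.mk k H H 1) (W.comul ∘ₗ W.εs)) ∘ₗ W.comul =
      (mulRight k (W.comul 1)) ∘ₗ (TensorProduct.mk k H H 1) := by
    apply LinearMap.ext; intro g
    simp only [LinearMap.comp_apply, mulRight_apply, TensorProduct.mk_apply]
    have h3a : W.comul ∘ₗ W.εs =
        (mulRight k (W.comul 1)) ∘ₗ (TensorProduct.mk k H H 1) ∘ₗ W.εs := by
      apply LinearMap.ext; intro x
      simp only [LinearMap.comp_apply, mulRight_apply, TensorProduct.mk_apply]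
      rw [W.comul_εs, W.comul_one_comm_εs]
    rw [h3a]
    have h3b : ∀ u : H ⊗[k] H,
        LinearMap.mul' k (H ⊗[k] H)
          ((map (TensorProduct.mk k H H 1)
            ((mulRight k (W.comul 1)) ∘ₗ (TensorProduct.mk k H H 1) ∘ₗ W.εs)) u) =
        ((1:H) ⊗ₜ[k] (LinearMap.mul' k H (lTensor H W.εs u))) * W.comul 1 := by
      intro u
      induction u using TensorProduct.induction_on with
      | zero => simp
      | tmul x y =>
        simp only [map_tmul, LinearMap.mul'_apply, lTensor_tmul, mulRight_apply,
          TensorProduct.mk_apply, LinearMap.comp_apply]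
        rw [← mul_assoc, Algebra.TensorProduct.tmul_mul_tmul, one_mul]
      | add u v hu hv =>
        simp only [map_add, TensorProduct.tmul_add, add_mul] at hu hv ⊢
        rw [hu, hv]
    rw [h3b, W.counit_s_comul]
  -- step 4 : `V = T' * Δ` where `T' g = (S g ⊗ 1) Δ1`
  have hstep4 : (mulRight k (W.comul 1)) ∘ₗ (TensorProduct.mk k H H 1) =
      (LinearMap.mul' k (H ⊗[k] H)) ∘ₗ
        (map ((mulRight k (W.comul 1)) ∘ₗ ((TensorProduct.mk k H H).flip 1) ∘ₗ W.antipode)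
          W.comul) ∘ₗ W.comul := by
    apply LinearMap.ext; intro g
    simp only [LinearMap.comp_apply, mulRight_apply, TensorProduct.mk_apply]
    have s4a : ∀ u : H ⊗[k] H,
        LinearMap.mul' k (H ⊗[k] H)
          ((map ((mulRight k (W.comul 1)) ∘ₗ ((TensorProduct.mk k H H).flip 1) ∘ₗ W.antipode)
            W.comul) u) =
        LinearMap.mul' k (H ⊗[k] H)
          ((map (((TensorProduct.mk k H H).flip 1) ∘ₗ W.antipode) W.comul) u) := by
      intro u
      induction u using TensorProduct.induction_on with
      | zero => simp
      | tmul x y =>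
        simp only [map_tmul, LinearMap.mul'_apply, LinearMap.comp_apply, mulRight_apply,
          LinearMap.flip_apply, TensorProduct.mk_apply]
        rw [mul_assoc, W.comul_one_mul]
      | add u v hu hv =>
        simp only [map_add, map_add] at hu hv ⊢
        rw [hu, hv]
    have s4b : ∀ (x : H) (v : H ⊗[k] H),
        (W.antipode x ⊗ₜ[k] (1:H)) * v =
          rTensor H ((LinearMap.mul' k H) ∘ₗ (rTensor H W.antipode))
            ((TensorProduct.assoc k H H H).symm (x ⊗ₜ[k] v)) := by
      intro x v
      induction v using TensorProduct.induction_on with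
      | zero => simp
      | tmul p q =>
        simp [TensorProduct.assoc_symm_tmul, Algebra.TensorProduct.tmul_mul_tmul, mul_one]
      | add u v hu hv =>
        simp only [mul_add, TensorProduct.tmul_add, map_add] at hu hv ⊢
        rw [hu, hv]
    have s4c : ∀ u : H ⊗[k] H,
        LinearMap.mul' k (H ⊗[k] H)
          ((map (((TensorProduct.mk k H H).flip 1) ∘ₗ W.antipode) W.comul) u) =
        rTensor H ((LinearMap.mul' k H) ∘ₗ (rTensor H W.antipode))
          ((TensorProduct.assoc k H H H).symm (lTensor H W.comul u)) := by
      intro u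
      induction u using TensorProduct.induction_on with
      | zero => simp
      | tmul x y =>
        simp only [map_tmul, LinearMap.mul'_apply, LinearMap.comp_apply,
          LinearMap.flip_apply, TensorProduct.mk_apply, lTensor_tmul]
        exact s4b x (W.comul y)
      | add u v hu hv =>
        simp only [map_add, map_add] at hu hv ⊢
        rw [hu, hv]
    rw [s4a, s4c]
    have s4d : (TensorProduct.assoc k H H H).symm (lTensor H W.comul (W.comul g)) =
        rTensor H W.comul (W.comul g) := by
      rw [← W.coassoc g, LinearEquiv.symm_apply_apply]
    rw [s4d, ← rTensor_comp_apply]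
    have hεs : ((LinearMap.mul' k H) ∘ₗ (rTensor H W.antipode)) ∘ₗ W.comul = W.εs := by
      apply LinearMap.ext; intro x
      exact W.antipode_left' x
    rw [hεs, W.rT_εs_comul]
  -- step 6 : `Δ * (Δ∘S) = Δ∘εt = ω`
  have hstep6 : (LinearMap.mul' k (H ⊗[k] H)) ∘ₗ
      (map W.comul (W.comul ∘ₗ W.antipode)) ∘ₗ W.comul =
      (mulRight k (W.comul 1)) ∘ₗ ((TensorProduct.mk k H H).flip 1) ∘ₗ W.εt := by
    apply LinearMap.ext; intro g
    simp only [LinearMap.comp_apply, mulRight_apply, LinearMap.flip_apply,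
      TensorProduct.mk_apply]
    have : map W.comul (W.comul ∘ₗ W.antipode) (W.comul g) =
        (map W.comul W.comul) (lTensor H W.antipode (W.comul g)) := by
      have := TensorProduct.map_comp W.comul W.comul LinearMap.id W.antipode
      rw [LinearMap.comp_id] at this
      rw [this, LinearMap.comp_apply]; rfl
    rw [this, ← W.comul_mul'_apply, W.antipode_right', W.comul_εt]
  -- now assemble
  rw [hstep1, W.conv_assoc, hstep3, hstep4, ← W.conv_assoc, hstep6]
  -- step 7 : absorb the middle `Δ1`
  have s7 : ∀ u : H ⊗[k] H,
      LinearMap.mul' k (H ⊗[k] H)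
        ((map ((mulRight k (W.comul 1)) ∘ₗ ((TensorProduct.mk k H H).flip 1) ∘ₗ W.antipode)
          ((mulRight k (W.comul 1)) ∘ₗ ((TensorProduct.mk k H H).flip 1) ∘ₗ W.εt)) u) =
      LinearMap.mul' k (H ⊗[k] H)
        ((map (((TensorProduct.mk k H H).flip 1) ∘ₗ W.antipode)
          ((mulRight k (W.comul 1)) ∘ₗ ((TensorProduct.mk k H H).flip 1) ∘ₗ W.εt)) u) := by
    intro u
    induction u using TensorProduct.induction_on with
    | zero => simp
    | tmul x y =>
      simp only [map_tmul, LinearMap.mul'_apply, LinearMap.comp_apply, mulRight_apply,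
        LinearMap.flip_apply, TensorProduct.mk_apply]
      rw [mul_assoc, W.comul_one_absorb]
    | add u v hu hv =>
      simp only [map_add, map_add] at hu hv ⊢
      rw [hu, hv]
  have s8 : ∀ u : H ⊗[k] H,
      LinearMap.mul' k (H ⊗[k] H)
        ((map (((TensorProduct.mk k H H).flip 1) ∘ₗ W.antipode)
          ((mulRight k (W.comul 1)) ∘ₗ ((TensorProduct.mk k H H).flip 1) ∘ₗ W.εt)) u) =
      ((LinearMap.mul' k H ((map W.antipode W.εt) u)) ⊗ₜ[k] (1:H)) * W.comul 1 := by
    intro u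
    induction u using TensorProduct.induction_on with
    | zero => simp
    | tmul x y =>
      simp only [map_tmul, LinearMap.mul'_apply, LinearMap.comp_apply, mulRight_apply,
        LinearMap.flip_apply, TensorProduct.mk_apply]
      rw [← mul_assoc, Algebra.TensorProduct.tmul_mul_tmul, mul_one]
    | add u v hu hv =>
      simp only [map_add, map_add, TensorProduct.add_tmul, add_mul] at hu hv ⊢
      rw [hu, hv]
  rw [s7, s8, W.antipode_conv_εt]

end WeakHopfAlgebra

set_option maxHeartbeats 2000000 in
open TensorProduct LinearMap in
/-- the fundamental theorem for right Hopf modules over a weak Hopf algebra.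
`M` is a right `H`-Hopf module (right action `act`, right coaction `coact`, with the
compatibility `ρ(m·h) = m₍₀₎·h₍₁₎ ⊗ m₍₁₎h₍₂₎`).  `N` is the space of coinvariants,
`A0 : N ⊗ H → M, n ⊗ h ↦ n·h`, and `Q` is the submodule of relations defining the
`H_t`-balanced tensor product `N ⊗_{H_t} H`.  The conclusions say that the induced map
`N ⊗_{H_t} H → M` is a bijective morphism of right Hopf modules whose inverse is
`β(m) = (m₍₀₎·S(m₍₁₎)) ⊗ m₍₂₎`. -/
theorem WeakHopfAlgebra.fundamental_theorem_of_hopf_modules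
    {k H : Type*} [Field k] [Ring H] [Algebra k H] [FiniteDimensional k H]
    (W : WeakHopfAlgebra k H)
    (M : Type*) [AddCommGroup M] [Module k M]
    -- right action of `H` on `M`
    (act : H →ₗ[k] M →ₗ[k] M)
    (act_one : act 1 = LinearMap.id)
    (act_mul : ∀ h g : H, act (h * g) = (act g) ∘ₗ (act h))
    -- right coaction of `H` on `M`
    (coact : M →ₗ[k] M ⊗[k] H)
    (coact_coassoc : ∀ m : M,
      (TensorProduct.assoc k M H H) ((LinearMap.rTensor H coact) (coact m)) =
        (LinearMap.lTensor M W.comul) (coact m))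
    (coact_counit : ∀ m : M,
      (TensorProduct.rid k M) ((LinearMap.lTensor M W.counit) (coact m)) = m)
    -- Hopf module compatibility: `ρ(m·h) = m₍₀₎·h₍₁₎ ⊗ m₍₁₎h₍₂₎`
    (compat : ∀ (m : M) (h : H),
      coact ((act h) m) =
        (TensorProduct.map (TensorProduct.lift act.flip) (LinearMap.mul' k H))
          ((TensorProduct.tensorTensorTensorComm k M H H H) (coact m ⊗ₜ[k] W.comul h)))
    -- `Ec m = m·1₍₁₎ ⊗ 1₍₂₎`
    (Ec : M →ₗ[k] M ⊗[k] H)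
    (hEc : Ec =
      (TensorProduct.map (TensorProduct.lift act.flip) LinearMap.id) ∘ₗ
        (TensorProduct.assoc k M H H).symm.toLinearMap ∘ₗ
          ((TensorProduct.mk k M (H ⊗[k] H)).flip (W.comul 1)))
    -- the coinvariants `N = {m | ρ(m) = m·1₍₁₎ ⊗ 1₍₂₎}`
    (N : Submodule k M)
    (hN : N = LinearMap.ker (coact - Ec))
    -- `α : N ⊗ H → M, n ⊗ h ↦ n·h`
    (A0 : (↥N) ⊗[k] H →ₗ[k] M)
    (hA0 : A0 = TensorProduct.lift (act.flip ∘ₗ N.subtype))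
    -- the `H_t`-balancing relations `(n·z) ⊗ h - n ⊗ (zh)`, `z ∈ H_t`
    (Q : Submodule k ((↥N) ⊗[k] H))
    (hQ : Q = Submodule.span k
      {x : (↥N) ⊗[k] H | ∃ (n : ↥N) (z h : H) (hm : (act (W.εt z)) (n : M) ∈ N),
        x = (⟨(act (W.εt z)) (n : M), hm⟩ : ↥N) ⊗ₜ[k] h - n ⊗ₜ[k] (W.εt z * h)})
    -- `β(m) = (m₍₀₎·S(m₍₁₎)) ⊗ m₍₂₎`
    (B0 : M →ₗ[k] M ⊗[k] H)
    (hB0 : B0 =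
      (TensorProduct.map
          ((TensorProduct.lift act.flip) ∘ₗ (LinearMap.lTensor M W.antipode)) LinearMap.id) ∘ₗ
        (TensorProduct.assoc k M H H).symm.toLinearMap ∘ₗ
          (LinearMap.lTensor M W.comul) ∘ₗ coact) :
    -- `α` descends to a bijection `N ⊗_{H_t} H → M` ...
    LinearMap.ker A0 = Q ∧
    Function.Surjective A0 ∧
    -- ... which is a morphism of right `H`-modules ...
    (∀ (x : (↥N) ⊗[k] H) (g : H),
      A0 ((LinearMap.lTensor (↥N) (LinearMap.mulRight k g)) x) = (act g) (A0 x)) ∧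
    -- ... and of right `H`-comodules ...
    (∀ x : (↥N) ⊗[k] H,
      coact (A0 x) =
        (LinearMap.rTensor H A0)
          ((TensorProduct.assoc k (↥N) H H).symm ((LinearMap.lTensor (↥N) W.comul) x))) ∧
    -- ... with inverse `β`: `β` takes values in `N ⊗ H` and `α ∘ β = id`.
    (∀ m : M, B0 m ∈ LinearMap.range (TensorProduct.map N.subtype (LinearMap.id : H →ₗ[k] H))) ∧
    (∀ m : M, (TensorProduct.lift act.flip) (B0 m) = m) := by
  -- ## basic computation helpers
  have m_act : ∀ (m : M) (h : H), TensorProduct.lift act.flip (m ⊗ₜ[k] h) = act h m := by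
    intro m h; simp
  have hA0t : ∀ (n : ↥N) (h : H), A0 (n ⊗ₜ[k] h) = act h (n : M) := by
    intro n h; rw [hA0]; simp
  have act_mul' : ∀ (a c : H) (m : M), act c (act a m) = act (a * c) m := by
    intro a c m; rw [act_mul a c]; rfl
  have hEc2 : ∀ m : M, Ec m = rTensor H (act.flip m) (W.comul 1) := by
    intro m
    rw [hEc]
    simp only [LinearMap.comp_apply, LinearMap.flip_apply, TensorProduct.mk_apply,
      LinearEquiv.coe_toLinearMap]
    generalize W.comul (1 : H) = t
    induction t using TensorProduct.induction_on with
    | zero => simp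
    | tmul a b => simp [TensorProduct.assoc_symm_tmul]
    | add u v hu hv => simp only [TensorProduct.tmul_add, map_add] at hu hv ⊢; rw [hu, hv]
  have Th : ∀ (m : M) (t u : H ⊗[k] H),
      (TensorProduct.map (TensorProduct.lift act.flip) (LinearMap.mul' k H))
        ((TensorProduct.tensorTensorTensorComm k M H H H)
          ((rTensor H (act.flip m) t) ⊗ₜ[k] u)) =
        rTensor H (act.flip m) (t * u) := by
    intro m t u
    induction t using TensorProduct.induction_on with
    | zero => simp
    | tmul a b =>
      induction u using TensorProduct.induction_on with
      | zero => simp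
      | tmul c d =>
        simp [TensorProduct.tensorTensorTensorComm_tmul,
          Algebra.TensorProduct.tmul_mul_tmul, act_mul' a c]
      | add p q hp hq =>
        simp only [mul_add, TensorProduct.tmul_add, map_add, LinearMap.add_apply] at hp hq ⊢; rw [hp, hq]
    | add p q hp hq =>
      simp only [add_mul, TensorProduct.add_tmul, map_add] at hp hq ⊢; rw [hp, hq]
  have hcoactN : ∀ n : M, n ∈ N → coact n = Ec n := by
    intro n hn
    rw [hN, LinearMap.mem_ker, LinearMap.sub_apply, sub_eq_zero] at hn
    exact hn
  have M3 : ∀ n : M, n ∈ N → ∀ h : H,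
      coact (act h n) = rTensor H (act.flip n) (W.comul h) := by
    intro n hn h
    rw [compat, hcoactN n hn, hEc2, Th, W.comul_one_mul]
  -- ## part 3 : right `H`-linearity
  have part3 : ∀ (x : (↥N) ⊗[k] H) (g : H),
      A0 ((lTensor (↥N) (mulRight k g)) x) = (act g) (A0 x) := by
    intro x g
    induction x using TensorProduct.induction_on with
    | zero => simp
    | tmul n h => rw [lTensor_tmul, mulRight_apply, hA0t, hA0t, act_mul' h g]
    | add u v hu hv => simp only [map_add] at hu hv ⊢; rw [hu, hv]
  -- ## part 4 : comodule morphism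
  have part4 : ∀ x : (↥N) ⊗[k] H,
      coact (A0 x) = (rTensor H A0)
        ((TensorProduct.assoc k (↥N) H H).symm ((lTensor (↥N) W.comul) x)) := by
    intro x
    induction x using TensorProduct.induction_on with
    | zero => simp
    | tmul n h =>
      rw [lTensor_tmul, hA0t, M3 (n : M) n.2 h]
      have : ∀ u : H ⊗[k] H,
          (rTensor H A0) ((TensorProduct.assoc k (↥N) H H).symm (n ⊗ₜ[k] u)) =
            rTensor H (act.flip (n : M)) u := by
        intro u
        induction u using TensorProduct.induction_on with
        | zero => simp
        | tmul c d => simp [TensorProduct.assoc_symm_tmul, hA0t]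
        | add p q hp hq =>
          simp only [TensorProduct.tmul_add, map_add] at hp hq ⊢; rw [hp, hq]
      rw [this]
    | add u v hu hv => simp only [map_add] at hu hv ⊢; rw [hu, hv]
  -- ## part 6 : `α ∘ β = id`
  have p6a : ∀ (m : M) (u : H ⊗[k] H),
      TensorProduct.lift act.flip
        ((TensorProduct.map ((TensorProduct.lift act.flip) ∘ₗ (lTensor M W.antipode))
            LinearMap.id)
          ((TensorProduct.assoc k M H H).symm (m ⊗ₜ[k] u))) =
      act (LinearMap.mul' k H (rTensor H W.antipode u)) m := by
    intro m u
    induction u using TensorProduct.induction_on with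
    | zero => simp
    | tmul c d =>
      simp only [TensorProduct.assoc_symm_tmul, TensorProduct.map_tmul,
        LinearMap.comp_apply, lTensor_tmul, LinearMap.id_coe, id_eq, m_act,
        rTensor_tmul, LinearMap.mul'_apply]
      rw [act_mul']
    | add p q hp hq =>
      simp only [TensorProduct.tmul_add, map_add, LinearMap.add_apply] at hp hq ⊢
      rw [hp, hq]
  have p6b : ∀ m : M, TensorProduct.lift act.flip (B0 m) =
      TensorProduct.lift act.flip (lTensor M W.εs (coact m)) := by
    intro m
    rw [hB0]
    simp only [LinearMap.comp_apply, LinearEquiv.coe_toLinearMap]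
    generalize coact m = w
    induction w using TensorProduct.induction_on with
    | zero => simp
    | tmul m' h =>
      rw [lTensor_tmul, lTensor_tmul, p6a, W.antipode_left', m_act]
    | add p q hp hq => simp only [map_add, LinearMap.add_apply] at hp hq ⊢; rw [hp, hq]
  have p6c : ∀ w : M ⊗[k] H,
      (TensorProduct.rid k M) ((lTensor M W.counit)
        ((TensorProduct.map (TensorProduct.lift act.flip) (LinearMap.mul' k H))
          ((TensorProduct.tensorTensorTensorComm k M H H H) (w ⊗ₜ[k] W.comul 1)))) =
      TensorProduct.lift act.flip (lTensor M W.εs w) := by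
    intro w
    induction w using TensorProduct.induction_on with
    | zero => simp
    | tmul m x =>
      have inner : ∀ t : H ⊗[k] H,
          (TensorProduct.rid k M) ((lTensor M W.counit)
            ((TensorProduct.map (TensorProduct.lift act.flip) (LinearMap.mul' k H))
              ((TensorProduct.tensorTensorTensorComm k M H H H) ((m ⊗ₜ[k] x) ⊗ₜ[k] t)))) =
          act ((TensorProduct.rid k H) ((lTensor H W.counit)
            ((((1:H) ⊗ₜ[k] x)) * t))) m := by
        intro t
        induction t using TensorProduct.induction_on with
        | zero => simp
        | tmul a b =>
          simp [TensorProduct.tensorTensorTensorComm_tmul,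
            Algebra.TensorProduct.tmul_mul_tmul, TensorProduct.tmul_smul, m_act]
        | add p q hp hq =>
          simp only [mul_add, TensorProduct.tmul_add, map_add, LinearMap.add_apply] at hp hq ⊢; rw [hp, hq]
      rw [inner (W.comul 1), lTensor_tmul, m_act, ← W.εs_eq]
    | add p q hp hq =>
      simp only [TensorProduct.add_tmul, map_add] at hp hq ⊢; rw [hp, hq]
  have part6 : ∀ m : M, TensorProduct.lift act.flip (B0 m) = m := by
    intro m
    have h1 : coact m =
        (TensorProduct.map (TensorProduct.lift act.flip) (LinearMap.mul' k H))
          ((TensorProduct.tensorTensorTensorComm k M H H H)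
            (coact m ⊗ₜ[k] W.comul 1)) := by
      have := compat m 1
      rwa [act_one, LinearMap.id_apply] at this
    rw [p6b, ← p6c (coact m), ← h1, coact_counit]
  -- ## part 5 : `β` lands in `N ⊗ H`
  set P : M →ₗ[k] M :=
    (TensorProduct.lift act.flip) ∘ₗ (lTensor M W.antipode) ∘ₗ coact with hP
  have p5a : ∀ m : M, B0 m = rTensor H P (coact m) := by
    intro m
    rw [hB0]
    simp only [LinearMap.comp_apply, LinearEquiv.coe_toLinearMap]
    rw [← coact_coassoc m, LinearEquiv.symm_apply_apply]
    generalize coact m = w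
    induction w using TensorProduct.induction_on with
    | zero => simp
    | tmul m' h => simp [hP]
    | add p q hp hq => simp only [map_add, LinearMap.add_apply] at hp hq ⊢; rw [hp, hq]
  have TL4 : ∀ (m : M) (x : H) (v : H ⊗[k] H),
      (TensorProduct.map (TensorProduct.lift act.flip) (LinearMap.mul' k H))
        ((TensorProduct.tensorTensorTensorComm k M H H H) ((m ⊗ₜ[k] x) ⊗ₜ[k] v)) =
      rTensor H (act.flip m) ((((1:H) ⊗ₜ[k] x)) * v) := by
    intro m x v
    induction v using TensorProduct.induction_on with
    | zero => simp
    | tmul p q =>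
      simp [TensorProduct.tensorTensorTensorComm_tmul,
        Algebra.TensorProduct.tmul_mul_tmul]
    | add p q hp hq =>
      simp only [mul_add, TensorProduct.tmul_add, map_add, LinearMap.add_apply] at hp hq ⊢; rw [hp, hq]
  have TL6 : ∀ (m : M) (z : H) (t : H ⊗[k] H),
      rTensor H (act.flip (act z m)) t = rTensor H (act.flip m) ((z ⊗ₜ[k] (1:H)) * t) := by
    intro m z t
    induction t using TensorProduct.induction_on with
    | zero => simp
    | tmul a b =>
      simp [Algebra.TensorProduct.tmul_mul_tmul, act_mul' z a]
    | add p q hp hq =>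
      simp only [mul_add, map_add] at hp hq ⊢; rw [hp, hq]
  have TL1 : ∀ w : M ⊗[k] H,
      coact (TensorProduct.lift act.flip w) =
        (TensorProduct.map (TensorProduct.lift act.flip) (LinearMap.mul' k H))
          ((TensorProduct.tensorTensorTensorComm k M H H H)
            ((TensorProduct.map coact W.comul) w)) := by
    intro w
    induction w using TensorProduct.induction_on with
    | zero => simp
    | tmul m h => rw [m_act, TensorProduct.map_tmul, compat]
    | add p q hp hq => simp only [map_add, LinearMap.add_apply] at hp hq ⊢; rw [hp, hq]
  have merge1 : ∀ w : M ⊗[k] H,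
      (TensorProduct.map coact W.comul) (lTensor M W.antipode w) =
        (TensorProduct.map coact (W.comul ∘ₗ W.antipode)) w := by
    intro w
    induction w using TensorProduct.induction_on with
    | zero => simp
    | tmul m h => simp
    | add p q hp hq => simp only [map_add, LinearMap.add_apply] at hp hq ⊢; rw [hp, hq]
  have split2 : ∀ w : M ⊗[k] H,
      (TensorProduct.map coact (W.comul ∘ₗ W.antipode)) w =
        lTensor (M ⊗[k] H) (W.comul ∘ₗ W.antipode) (rTensor H coact w) := by
    intro w
    induction w using TensorProduct.induction_on with
    | zero => simp
    | tmul m h => simp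
    | add p q hp hq => simp only [map_add, LinearMap.add_apply] at hp hq ⊢; rw [hp, hq]
  have TL2 : ∀ y : (M ⊗[k] H) ⊗[k] H,
      (TensorProduct.map (TensorProduct.lift act.flip) (LinearMap.mul' k H))
        ((TensorProduct.tensorTensorTensorComm k M H H H)
          (lTensor (M ⊗[k] H) (W.comul ∘ₗ W.antipode) y)) =
      (TensorProduct.map (TensorProduct.lift act.flip) (LinearMap.mul' k H))
        ((TensorProduct.tensorTensorTensorComm k M H H H)
          ((TensorProduct.assoc k M H (H ⊗[k] H)).symm
            ((lTensor M (lTensor H (W.comul ∘ₗ W.antipode)))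
              ((TensorProduct.assoc k M H H) y)))) := by
    intro y
    induction y using TensorProduct.induction_on with
    | zero => simp
    | tmul w h =>
      induction w using TensorProduct.induction_on with
      | zero => simp
      | tmul m x => simp [TensorProduct.assoc_tmul, TensorProduct.assoc_symm_tmul]
      | add p q hp hq =>
        simp only [TensorProduct.add_tmul, map_add] at hp hq ⊢; rw [hp, hq]
    | add p q hp hq => simp only [map_add, LinearMap.add_apply] at hp hq ⊢; rw [hp, hq]
  have TL5 : ∀ (m : M) (u : H ⊗[k] H),
      (TensorProduct.map (TensorProduct.lift act.flip) (LinearMap.mul' k H))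
        ((TensorProduct.tensorTensorTensorComm k M H H H)
          ((TensorProduct.assoc k M H (H ⊗[k] H)).symm
            ((lTensor M (lTensor H (W.comul ∘ₗ W.antipode))) (m ⊗ₜ[k] u)))) =
      rTensor H (act.flip m)
        ((LinearMap.mul' k (H ⊗[k] H))
          ((TensorProduct.map (TensorProduct.mk k H H 1) (W.comul ∘ₗ W.antipode)) u)) := by
    intro m u
    induction u using TensorProduct.induction_on with
    | zero => simp
    | tmul x y =>
      simp only [lTensor_tmul, TensorProduct.assoc_symm_tmul, TensorProduct.map_tmul,
        LinearMap.mul'_apply, TensorProduct.mk_apply, LinearMap.comp_apply]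
      exact TL4 m x (W.comul (W.antipode y))
    | add p q hp hq =>
      simp only [TensorProduct.tmul_add, map_add] at hp hq ⊢; rw [hp, hq]
  have TL7 : ∀ w : M ⊗[k] H,
      (TensorProduct.map (TensorProduct.lift act.flip) (LinearMap.mul' k H))
        ((TensorProduct.tensorTensorTensorComm k M H H H)
          ((TensorProduct.assoc k M H (H ⊗[k] H)).symm
            ((lTensor M (lTensor H (W.comul ∘ₗ W.antipode)))
              ((lTensor M W.comul) w)))) =
      Ec (TensorProduct.lift act.flip (lTensor M W.antipode w)) := by
    intro w
    induction w using TensorProduct.induction_on with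
    | zero => simp
    | tmul m h =>
      rw [lTensor_tmul, TL5, W.dagger, lTensor_tmul, m_act, hEc2, TL6]
    | add p q hp hq => simp only [map_add, LinearMap.add_apply] at hp hq ⊢; rw [hp, hq]
  have p5b : ∀ m : M, coact (P m) = Ec (P m) := by
    intro m
    have e1 : coact (P m) =
        (TensorProduct.map (TensorProduct.lift act.flip) (LinearMap.mul' k H))
          ((TensorProduct.tensorTensorTensorComm k M H H H)
            ((TensorProduct.map coact W.comul) (lTensor M W.antipode (coact m)))) := by
      rw [hP]; simp only [LinearMap.comp_apply]; exact TL1 _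
    rw [e1, merge1, split2, TL2, coact_coassoc m, TL7]
    rw [hP]; simp only [LinearMap.comp_apply]
  have p5mem : ∀ m : M, P m ∈ N := by
    intro m
    rw [hN, LinearMap.mem_ker, LinearMap.sub_apply, sub_eq_zero]
    exact p5b m
  set P' : M →ₗ[k] ↥N := LinearMap.codRestrict N P p5mem with hP'
  have p5c : ∀ w : M ⊗[k] H,
      (TensorProduct.map N.subtype LinearMap.id) (rTensor H P' w) = rTensor H P w := by
    intro w
    induction w using TensorProduct.induction_on with
    | zero => simp
    | tmul m h => simp [hP']
    | add p q hp hq => simp only [map_add, LinearMap.add_apply] at hp hq ⊢; rw [hp, hq]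
  have part5 : ∀ m : M, B0 m ∈ LinearMap.range
      (TensorProduct.map N.subtype (LinearMap.id : H →ₗ[k] H)) := by
    intro m
    exact ⟨rTensor H P' (coact m), by rw [p5c, ← p5a]⟩
  -- ## part 2 : surjectivity
  have hA0L : ∀ y : (↥N) ⊗[k] H,
      A0 y = TensorProduct.lift act.flip
        ((TensorProduct.map N.subtype LinearMap.id) y) := by
    intro y
    induction y using TensorProduct.induction_on with
    | zero => simp
    | tmul n h => simp [hA0t, m_act]
    | add p q hp hq => simp only [map_add, LinearMap.add_apply] at hp hq ⊢; rw [hp, hq]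
  have part2 : Function.Surjective A0 := by
    intro m
    refine ⟨rTensor H P' (coact m), ?_⟩
    rw [hA0L, p5c, ← p5a, part6]
  -- ## part 1 : kernel of `A0` is `Q`
  have pP : ∀ n : M, n ∈ N → ∀ g : H, P (act g n) = act (W.εt g) n := by
    intro n hn g
    rw [hP]
    simp only [LinearMap.comp_apply]
    rw [M3 n hn g]
    have : ∀ u : H ⊗[k] H,
        TensorProduct.lift act.flip (lTensor M W.antipode (rTensor H (act.flip n) u)) =
          act (LinearMap.mul' k H (lTensor H W.antipode u)) n := by
      intro u
      induction u using TensorProduct.induction_on with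
      | zero => simp
      | tmul c d => simp [m_act, act_mul']
      | add p q hp hq => simp only [map_add, LinearMap.add_apply] at hp hq ⊢; rw [hp, hq]
    rw [this, W.antipode_right']
  have pE : ∀ n : M, n ∈ N → ∀ z : H, act (W.εt z) n ∈ N := by
    intro n hn z
    rw [hN, LinearMap.mem_ker, LinearMap.sub_apply, sub_eq_zero]
    rw [M3 n hn (W.εt z), W.comul_εt, ← TL6, hEc2]
  have key : ∀ x : (↥N) ⊗[k] H, Q.mkQ (rTensor H P' (coact (A0 x))) = Q.mkQ x := by
    intro x
    induction x using TensorProduct.induction_on with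
    | zero => simp
    | tmul n h =>
      rw [hA0t, M3 (n : M) n.2 h, ← rTensor_comp_apply]
      have hμ : ∀ u : H ⊗[k] H,
          Q.mkQ (rTensor H (P' ∘ₗ act.flip (n : M)) u) =
            Q.mkQ ((n : ↥N) ⊗ₜ[k] (LinearMap.mul' k H (rTensor H W.εt u))) := by
        intro u
        induction u using TensorProduct.induction_on with
        | zero => simp
        | tmul c d =>
          rw [rTensor_tmul, rTensor_tmul, LinearMap.mul'_apply, LinearMap.comp_apply]
          rw [Q.mkQ_apply, Q.mkQ_apply, Submodule.Quotient.eq]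
          rw [hQ]
          apply Submodule.subset_span
          refine ⟨n, c, d, pE (n : M) n.2 c, ?_⟩
          congr 1
          · congr 1
            apply Subtype.ext
            simp only [LinearMap.codRestrict_apply, flip_apply]
            exact pP (n : M) n.2 c
        | add p q hp hq =>
          simp only [map_add, TensorProduct.tmul_add] at hp hq ⊢; rw [hp, hq]
      rw [hμ (W.comul h), W.counit_t_comul]
    | add p q hp hq => simp only [map_add, LinearMap.add_apply] at hp hq ⊢; rw [hp, hq]
  have part1 : LinearMap.ker A0 = Q := by
    apply le_antisymm
    · intro x hx
      rw [LinearMap.mem_ker] at hx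
      have h2 := key x
      rw [hx, map_zero, map_zero, map_zero] at h2
      rw [← Submodule.Quotient.mk_eq_zero Q, ← Q.mkQ_apply, ← h2]
    · rw [hQ]
      rw [Submodule.span_le]
      rintro x ⟨n, z, h, hm, rfl⟩
      rw [SetLike.mem_coe, LinearMap.mem_ker, map_sub, hA0t, hA0t]
      simp only [← act_mul' (W.εt z) h]
      rw [sub_self]
  exact ⟨part1, part2, part3, part4, part5, part6⟩
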